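/- Let u be a C² solution on (0,b] of -h²u'' + (V - E)u = 0 with E - V > 0 and V C² on [0,b]. With φ_± and r = -a''/a as above, there exist constants α_± ∈ ℂ such that for all x ∈ (0,b]: u(x) = α_+φ_+(x) + α_-φ_-(x) - (h/2i)∫_x^b r(y)u(y)[φ_-(y)φ_+(x) - φ_+(y)φ_-(x)] dy. -/

import Mathlib

open Set

noncomputable def wkbA (E : ℝ) (V : ℝ → ℝ) (x : ℝ) : ℝ := (E - V x) ^ (-(1/4 : ℝ))

noncomputable def wkbS (E : ℝ) (V : ℝ → ℝ) (x : ℝ) : ℝ :=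
  ∫ y in (0 : ℝ)..x, Real.sqrt (E - V y)

noncomputable def wkbPhi (h E : ℝ) (V : ℝ → ℝ) (s : ℝ) (x : ℝ) : ℂ :=
  (wkbA E V x : ℂ) * Complex.exp (s * Complex.I * (wkbS E V x) / h)

noncomputable def wkbR (E : ℝ) (V : ℝ → ℝ) (x : ℝ) : ℝ :=
  -(deriv (deriv (wkbA E V)) x) / wkbA E V x

set_option maxHeartbeats 1000000 in
theorem stmt13 (h b E : ℝ) (hh : 0 < h) (hb : 0 < b)
    (V : ℝ → ℝ) (hV : ContDiff ℝ 2 V) (hpos : ∀ x ∈ Icc 0 b, 0 < E - V x)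
    (u : ℝ → ℂ) (hu : ContDiff ℝ 2 u)
    (hODE : ∀ x ∈ Ioc 0 b,
      -(h : ℂ) ^ 2 * deriv (deriv u) x + ((V x - E : ℝ) : ℂ) * u x = 0) :
    ∃ αp αm : ℂ, ∀ x ∈ Ioc 0 b,
      u x = αp * wkbPhi h E V 1 x + αm * wkbPhi h E V (-1) x
        - (h / (2 * Complex.I)) * ∫ y in x..b, (wkbR E V y : ℂ) * u y *
            (wkbPhi h E V (-1) y * wkbPhi h E V 1 x
              - wkbPhi h E V 1 y * wkbPhi h E V (-1) x) := by
  have hh0 : h ≠ 0 := hh.ne'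
  have hhC : (h : ℂ) ≠ 0 := by exact_mod_cast hh0
  -- smoothness of V
  have hVc : Continuous V := hV.continuous
  have hV1 : Differentiable ℝ V := hV.differentiable (by norm_num)
  have hV'C : ContDiff ℝ 1 (deriv V) :=
    ((contDiff_succ_iff_deriv (n := 1)).mp (show ContDiff ℝ (1+1) V by norm_num [hV])).2.2
  have hV'1 : Differentiable ℝ (deriv V) := hV'C.differentiable one_ne_zero
  have hV'c : Continuous (deriv V) := hV'C.continuous
  have hV''c : Continuous (deriv (deriv V)) := (contDiff_one_iff_deriv.mp hV'C).2
  -- smoothness of u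
  have hu1 : ∀ x, HasDerivAt u (deriv u x) x :=
    fun x => (hu.differentiable (by norm_num) x).hasDerivAt
  have hu'C : ContDiff ℝ 1 (deriv u) :=
    ((contDiff_succ_iff_deriv (n := 1)).mp (show ContDiff ℝ (1+1) u by norm_num [hu])).2.2
  have hu2 : ∀ x, HasDerivAt (deriv u) (deriv (deriv u) x) x :=
    fun x => (hu'C.differentiable one_ne_zero x).hasDerivAt
  have huc : Continuous u := hu.continuous
  -- the open set O
  set O : Set ℝ := {x | 0 < E - V x} with hOdef
  have hOopen : IsOpen O := isOpen_lt continuous_const (continuous_const.sub hVc)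
  have hsub : Ioc 0 b ⊆ O := fun x hx => hpos x (Ioc_subset_Icc_self hx)
  -- derivative of g = E - V
  have hgd : ∀ x : ℝ, HasDerivAt (fun y => E - V y) (-(deriv V x)) x := fun x => by
    exact ((hasDerivAt_const x E).sub (hV1 x).hasDerivAt).congr_deriv (zero_sub _)
  -- a and its derivatives
  set A1 : ℝ → ℝ := fun x => -(deriv V x) * (-(1/4)) * (E - V x) ^ (-(1/4) - 1 : ℝ) with hA1def
  have hA1 : ∀ x ∈ O, HasDerivAt (wkbA E V) (A1 x) x := fun x hx =>
    (hgd x).rpow_const (Or.inl (ne_of_gt hx))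
  have hderiva : Set.EqOn (deriv (wkbA E V)) A1 O := fun x hx => (hA1 x hx).deriv
  set A2 : ℝ → ℝ := fun x =>
      (-(deriv (deriv V) x) * (-(1/4))) * (E - V x) ^ (-(1/4) - 1 : ℝ)
      + (-(deriv V x) * (-(1/4))) *
        (-(deriv V x) * (-(1/4) - 1) * (E - V x) ^ (-(1/4) - 1 - 1 : ℝ)) with hA2def
  have hA1d : ∀ x ∈ O, HasDerivAt A1 (A2 x) x := by
    intro x hx
    have t1 : HasDerivAt (fun y => -(deriv V y) * (-(1/4) : ℝ))
        (-(deriv (deriv V) x) * (-(1/4))) x :=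
      ((hV'1 x).hasDerivAt.neg).mul_const _
    have t2 : HasDerivAt (fun y => (E - V y) ^ (-(1/4) - 1 : ℝ))
        (-(deriv V x) * (-(1/4) - 1) * (E - V x) ^ (-(1/4) - 1 - 1 : ℝ)) x :=
      (hgd x).rpow_const (Or.inl (ne_of_gt hx))
    exact t1.mul t2
  have hA2 : ∀ x ∈ O, HasDerivAt (deriv (wkbA E V)) (A2 x) x := by
    intro x hx
    refine (hA1d x hx).congr_of_eventuallyEq ?_
    exact Filter.eventuallyEq_of_mem (hOopen.mem_nhds hx) hderiva
  have hA2eq : ∀ x ∈ O, deriv (deriv (wkbA E V)) x = A2 x := fun x hx => (hA2 x hx).deriv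
  have hane : ∀ x ∈ O, wkbA E V x ≠ 0 := fun x hx =>
    ne_of_gt (Real.rpow_pos_of_pos hx _)
  have hRa : ∀ x ∈ O, (wkbR E V x) * wkbA E V x = -A2 x := by
    intro x hx
    rw [wkbR, hA2eq x hx, neg_div, neg_mul, div_mul_cancel₀ _ (hane x hx)]
  -- sqrt and S
  set sq : ℝ → ℝ := fun x => Real.sqrt (E - V x) with hsqdef
  have hsqc : Continuous sq := Real.continuous_sqrt.comp (continuous_const.sub hVc)
  set SQ : ℝ → ℝ := fun x => -(deriv V x) * ((1:ℝ)/2) * (E - V x) ^ ((1:ℝ)/2 - 1) with hSQdef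
  have hsq : ∀ x ∈ O, HasDerivAt sq (SQ x) x := by
    intro x hx
    have hfe : (fun y : ℝ => Real.sqrt (E - V y)) = fun y => (E - V y) ^ ((1:ℝ)/2) := by
      funext y; exact Real.sqrt_eq_rpow _
    rw [hsqdef, hfe]
    exact (hgd x).rpow_const (Or.inl (ne_of_gt hx))
  have hS : ∀ x : ℝ, HasDerivAt (wkbS E V) (sq x) x := fun x =>
    intervalIntegral.integral_hasDerivAt_right
      (hsqc.intervalIntegrable 0 x) (hsqc.stronglyMeasurableAtFilter _ _)
      hsqc.continuousAt
  have hSdiff : Differentiable ℝ (wkbS E V) := fun x => (hS x).differentiableAt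
  have hScont : Continuous (wkbS E V) := hSdiff.continuous
  -- continuity facts on O
  have hrpowcont : ∀ p : ℝ, ContinuousOn (fun x => (E - V x) ^ p) O := by
    intro p
    apply ContinuousOn.rpow_const (continuous_const.sub hVc).continuousOn
    exact fun x hx => Or.inl (ne_of_gt hx)
  have hacont : ContinuousOn (wkbA E V) O := hrpowcont _
  have hA2cont : ContinuousOn A2 O := by
    rw [hA2def]
    apply ContinuousOn.add
    · exact (hV''c.neg.mul continuous_const).continuousOn.mul (hrpowcont _)
    · exact ((hV'c.neg.mul continuous_const).continuousOn).mul
        (((hV'c.neg.mul ((continuous_const :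
          Continuous fun _ : ℝ => (-(1/4) - 1 : ℝ)))).continuousOn).mul (hrpowcont _))
  have hRcont : ContinuousOn (wkbR E V) O := by
    refine ContinuousOn.congr (f := fun x => -A2 x / wkbA E V x) ?_ ?_
    · exact (hA2cont.neg).div hacont (fun x hx => hane x hx)
    · intro x hx; rw [wkbR, hA2eq x hx]
  have hexpc : ∀ s : ℝ, Continuous
      (fun x => Complex.exp ((s : ℂ) * Complex.I * (wkbS E V x) / h)) := fun s =>
    ((continuous_const.mul (Complex.continuous_ofReal.comp hScont)).div_const (h : ℂ)).cexp
  have hphicont : ∀ s : ℝ, ContinuousOn (wkbPhi h E V s) O := fun s =>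
    (Complex.continuous_ofReal.comp_continuousOn hacont).mul (hexpc s).continuousOn
  -- derivative of phi
  have hE : ∀ (s : ℝ) (x : ℝ),
      HasDerivAt (fun y => Complex.exp ((s : ℂ) * Complex.I * (wkbS E V y) / h))
        (Complex.exp ((s : ℂ) * Complex.I * (wkbS E V x) / h)
          * ((s : ℂ) * Complex.I * (sq x) / h)) x := fun s x =>
    ((((hS x).ofReal_comp).const_mul ((s : ℂ) * Complex.I)).div_const (h : ℂ)).cexp
  set P : ℝ → ℝ → ℂ := fun s x =>
      ((A1 x : ℂ) + (s : ℂ) * Complex.I * ((sq x * wkbA E V x : ℝ) : ℂ) / h)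
        * Complex.exp ((s : ℂ) * Complex.I * (wkbS E V x) / h) with hPdef
  have hPhi : ∀ (s : ℝ), ∀ x ∈ O, HasDerivAt (wkbPhi h E V s) (P s x) x := by
    intro s x hx
    have hd := ((hA1 x hx).ofReal_comp).mul (hE s x)
    have heq : (A1 x : ℂ) * Complex.exp ((s : ℂ) * Complex.I * (wkbS E V x) / h)
        + (wkbA E V x : ℂ) * (Complex.exp ((s : ℂ) * Complex.I * (wkbS E V x) / h)
          * ((s : ℂ) * Complex.I * (sq x) / h)) = P s x := by
      rw [hPdef]; push_cast; ring
    rw [← heq]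
    exact hd
  -- the potential of the phi-equation
  set qc : ℝ → ℂ := fun x => ((V x - E : ℝ) : ℂ) / (h:ℂ)^2 - (wkbR E V x : ℂ) with hqcdef
  -- key algebraic identities
  have key1 : ∀ x ∈ O, SQ x * wkbA E V x + 2 * sq x * A1 x = 0 := by
    intro x hx
    have e1 : (E - V x) ^ ((1:ℝ)/2 - 1) * (E - V x) ^ (-(1/4) : ℝ)
        = (E - V x) ^ ((1:ℝ)/2) * (E - V x) ^ (-(1/4) - 1 : ℝ) := by
      rw [← Real.rpow_add hx, ← Real.rpow_add hx]; norm_num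
    rw [hSQdef, hA1def, hsqdef]
    show -(deriv V x) * ((1:ℝ)/2) * (E - V x) ^ ((1:ℝ)/2 - 1) * wkbA E V x
      + 2 * Real.sqrt (E - V x) * (-(deriv V x) * (-(1/4)) * (E - V x) ^ (-(1/4) - 1 : ℝ)) = 0
    rw [wkbA, Real.sqrt_eq_rpow]
    linear_combination (-(deriv V x) * ((1:ℝ)/2)) * e1
  have key2 : ∀ x ∈ O, sq x ^ 2 = E - V x := fun x hx => Real.sq_sqrt (le_of_lt hx)
  have key0 : ∀ x ∈ O, (wkbA E V x) ^ 2 * sq x = 1 := by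
    intro x hx
    rw [hsqdef]
    show (wkbA E V x) ^ 2 * Real.sqrt (E - V x) = 1
    rw [wkbA, Real.sqrt_eq_rpow, ← Real.rpow_natCast ((E - V x) ^ (-(1/4) : ℝ)) 2,
      ← Real.rpow_mul (le_of_lt hx), ← Real.rpow_add hx]
    norm_num
  -- second derivative of phi: P s has derivative qc * phi
  have hPder : ∀ s : ℝ, s^2 = 1 → ∀ x ∈ O,
      HasDerivAt (P s) (qc x * wkbPhi h E V s x) x := by
    intro s hs x hx
    have dinner : HasDerivAt
        (fun y => (A1 y : ℂ) + (s : ℂ) * Complex.I * ((sq y * wkbA E V y : ℝ) : ℂ) / h)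
        ((A2 x : ℂ) + (s : ℂ) * Complex.I * ((SQ x * wkbA E V x + sq x * A1 x : ℝ) : ℂ) / h)
        x := by
      refine ((hA1d x hx).ofReal_comp).add ?_
      exact ((((hsq x hx).mul (hA1 x hx)).ofReal_comp).const_mul
        ((s : ℂ) * Complex.I)).div_const (h : ℂ)
    have hd := dinner.mul (hE s x)
    have heq : ((A2 x : ℂ) + (s : ℂ) * Complex.I * ((SQ x * wkbA E V x + sq x * A1 x : ℝ) : ℂ) / h)
          * Complex.exp ((s : ℂ) * Complex.I * (wkbS E V x) / h)
        + ((A1 x : ℂ) + (s : ℂ) * Complex.I * ((sq x * wkbA E V x : ℝ) : ℂ) / h)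
          * (Complex.exp ((s : ℂ) * Complex.I * (wkbS E V x) / h)
            * ((s : ℂ) * Complex.I * (sq x) / h))
        = qc x * wkbPhi h E V s x := by
      have k1 : ((SQ x : ℝ) : ℂ) * ((wkbA E V x : ℝ) : ℂ)
          + 2 * ((sq x : ℝ) : ℂ) * ((A1 x : ℝ) : ℂ) = 0 := by
        exact_mod_cast congrArg (fun t : ℝ => (t : ℂ)) (key1 x hx)
      have k2 : ((sq x : ℝ) : ℂ)^2 = (E : ℂ) - (V x : ℂ) := by
        rw [← Complex.ofReal_pow, key2 x hx]; push_cast; ring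
      have k3 : ((wkbR E V x : ℝ) : ℂ) * ((wkbA E V x : ℝ) : ℂ) = -((A2 x : ℝ) : ℂ) := by
        rw [← Complex.ofReal_mul, hRa x hx]; push_cast; ring
      have hs' : ((s : ℝ) : ℂ)^2 = 1 := by
        rw [← Complex.ofReal_pow, hs]; norm_num
      have hI2 : (Complex.I)^2 = -1 := Complex.I_sq
      rw [hqcdef, wkbPhi]
      push_cast
      set EX := Complex.exp ((s : ℂ) * Complex.I * (wkbS E V x) / h) with hEX
      linear_combination (EX * (s:ℂ) * Complex.I / (h:ℂ)) * k1
        + (EX * (wkbA E V x : ℂ) / (h:ℂ)^2 * Complex.I^2 * ((sq x : ℂ))^2) * hs'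
        + (EX * (wkbA E V x : ℂ) / (h:ℂ)^2 * ((sq x : ℂ))^2) * hI2
        - (EX * (wkbA E V x : ℂ) / (h:ℂ)^2) * k2
        + EX * k3
    rw [← heq]
    exact hd
  -- Wronskian
  have hW : ∀ x ∈ O, wkbPhi h E V 1 x * P (-1) x - P 1 x * wkbPhi h E V (-1) x
      = -(2 * Complex.I) / h := by
    intro x hx
    have hEE : Complex.exp (1 * Complex.I * ((wkbS E V x : ℝ) : ℂ) / (h:ℂ))
        * Complex.exp (-1 * Complex.I * ((wkbS E V x : ℝ) : ℂ) / (h:ℂ)) = 1 := by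
      rw [← Complex.exp_add, ← Complex.exp_zero]
      congr 1
      ring
    have k0 : ((wkbA E V x : ℝ) : ℂ)^2 * ((sq x : ℝ) : ℂ) = 1 := by
      rw [← Complex.ofReal_pow, ← Complex.ofReal_mul, key0 x hx]; norm_num
    rw [wkbPhi, wkbPhi, hPdef]
    push_cast
    linear_combination (-(2 * Complex.I) * ((wkbA E V x : ℂ))^2 * ((sq x : ℂ)) / (h:ℂ)) * hEE
      + (-(2 * Complex.I) / (h:ℂ)) * k0
  -- integrands
  set fm : ℝ → ℂ := fun y => (wkbR E V y : ℂ) * u y * wkbPhi h E V (-1) y with hfmdef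
  set fp : ℝ → ℂ := fun y => (wkbR E V y : ℂ) * u y * wkbPhi h E V 1 y with hfpdef
  have hfmcont : ContinuousOn fm O :=
    ((Complex.continuous_ofReal.comp_continuousOn hRcont).mul huc.continuousOn).mul (hphicont _)
  have hfpcont : ContinuousOn fp O :=
    ((Complex.continuous_ofReal.comp_continuousOn hRcont).mul huc.continuousOn).mul (hphicont _)
  have hIccsub : ∀ t ∈ Ioc 0 b, Icc t b ⊆ O := by
    intro t ht y hy
    exact hsub ⟨lt_of_lt_of_le ht.1 hy.1, hy.2⟩
  have hintm : ∀ t ∈ Ioc 0 b, IntervalIntegrable fm MeasureTheory.volume t b := by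
    intro t ht
    apply ContinuousOn.intervalIntegrable
    rw [uIcc_of_le ht.2]
    exact hfmcont.mono (hIccsub t ht)
  have hintp : ∀ t ∈ Ioc 0 b, IntervalIntegrable fp MeasureTheory.volume t b := by
    intro t ht
    apply ContinuousOn.intervalIntegrable
    rw [uIcc_of_le ht.2]
    exact hfpcont.mono (hIccsub t ht)
  set Jm : ℝ → ℂ := fun t => ∫ y in t..b, fm y with hJmdef
  set Jp : ℝ → ℂ := fun t => ∫ y in t..b, fp y with hJpdef
  have hJm : ∀ t ∈ Ioc 0 b, HasDerivAt Jm (-fm t) t := fun t ht =>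
    intervalIntegral.integral_hasDerivAt_left (hintm t ht)
      (ContinuousOn.stronglyMeasurableAtFilter hOopen hfmcont t (hsub ht))
      (hfmcont.continuousAt (hOopen.mem_nhds (hsub ht)))
  have hJp : ∀ t ∈ Ioc 0 b, HasDerivAt Jp (-fp t) t := fun t ht =>
    intervalIntegral.integral_hasDerivAt_left (hintp t ht)
      (ContinuousOn.stronglyMeasurableAtFilter hOopen hfpcont t (hsub ht))
      (hfpcont.continuousAt (hOopen.mem_nhds (hsub ht)))
  set cp : ℝ → ℂ := fun t => ((h:ℂ) / (2*Complex.I)) * Jm t with hcpdef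
  set cm : ℝ → ℂ := fun t => -((h:ℂ) / (2*Complex.I)) * Jp t with hcmdef
  have hcp : ∀ t ∈ Ioc 0 b, HasDerivAt cp (-((h:ℂ)/(2*Complex.I)) * fm t) t := by
    intro t ht
    have hd := (hJm t ht).const_mul ((h:ℂ)/(2*Complex.I))
    have : -((h:ℂ)/(2*Complex.I)) * fm t = ((h:ℂ)/(2*Complex.I)) * (-fm t) := by ring
    rw [this]
    exact hd
  have hcm : ∀ t ∈ Ioc 0 b, HasDerivAt cm (((h:ℂ)/(2*Complex.I)) * fp t) t := by
    intro t ht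
    have hd := (hJp t ht).const_mul (-((h:ℂ)/(2*Complex.I)))
    have : ((h:ℂ)/(2*Complex.I)) * fp t = -((h:ℂ)/(2*Complex.I)) * (-fp t) := by ring
    rw [this]
    exact hd
  set w : ℝ → ℂ := fun t => u t + cp t * wkbPhi h E V 1 t + cm t * wkbPhi h E V (-1) t
    with hwdef
  set w1 : ℝ → ℂ := fun t => deriv u t + cp t * P 1 t + cm t * P (-1) t with hw1def
  have hw : ∀ t ∈ Ioc 0 b, HasDerivAt w (w1 t) t := by
    intro t ht
    have hO' := hsub ht
    have hder := ((hu1 t).add ((hcp t ht).mul (hPhi 1 t hO'))).add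
      ((hcm t ht).mul (hPhi (-1) t hO'))
    refine hder.congr_deriv (Eq.symm ?_)
    simp only [hw1def, hfmdef, hfpdef]
    ring
  have hODE' : ∀ t ∈ Ioc 0 b, deriv (deriv u) t = ((V t - E : ℝ) : ℂ) / (h:ℂ)^2 * u t := by
    intro t ht
    have hO2 := hODE t ht
    field_simp
    push_cast at hO2 ⊢
    linear_combination -hO2
  have hw1d : ∀ t ∈ Ioc 0 b, HasDerivAt w1 (qc t * w t) t := by
    intro t ht
    have hO' := hsub ht
    have hder := ((hu2 t).add ((hcp t ht).mul (hPder 1 (by norm_num) t hO'))).add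
      ((hcm t ht).mul (hPder (-1) (by norm_num) t hO'))
    refine hder.congr_deriv (Eq.symm ?_)
    have hcanc : (h:ℂ)/(2*Complex.I) * (2*Complex.I/(h:ℂ)) = 1 := by
      field_simp
    simp only [hwdef, hfmdef, hfpdef, hqcdef]
    linear_combination (-1 : ℂ) * hODE' t ht
      + (-((h:ℂ)/(2*Complex.I)) * ((wkbR E V t : ℝ):ℂ) * u t) * hW t hO'
      + (((wkbR E V t : ℝ):ℂ) * u t) * hcanc
  set aF : ℝ → ℂ := fun t => w t * P (-1) t - w1 t * wkbPhi h E V (-1) t with haFdef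
  set bF : ℝ → ℂ := fun t => w1 t * wkbPhi h E V 1 t - w t * P 1 t with hbFdef
  have haD : ∀ t ∈ Ioc 0 b, HasDerivAt aF 0 t := by
    intro t ht
    have hO' := hsub ht
    have hder := ((hw t ht).mul (hPder (-1) (by norm_num) t hO')).sub
      ((hw1d t ht).mul (hPhi (-1) t hO'))
    refine hder.congr_deriv (Eq.symm ?_)
    ring
  have hbD : ∀ t ∈ Ioc 0 b, HasDerivAt bF 0 t := by
    intro t ht
    have hO' := hsub ht
    have hder := ((hw1d t ht).mul (hPhi 1 t hO')).sub
      ((hw t ht).mul (hPder 1 (by norm_num) t hO'))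
    refine hder.congr_deriv (Eq.symm ?_)
    ring
  have hconst : ∀ σ : ℝ → ℂ, (∀ t ∈ Ioc 0 b, HasDerivAt σ 0 t) →
      ∀ x ∈ Ioc 0 b, σ x = σ b := by
    intro σ hσ x hx
    have hmem : ∀ t ∈ Icc x b, t ∈ Ioc 0 b := fun t ht =>
      ⟨lt_of_lt_of_le hx.1 ht.1, ht.2⟩
    have hcont : ContinuousOn σ (Icc x b) := fun t ht =>
      ((hσ t (hmem t ht)).continuousAt).continuousWithinAt
    have hder : ∀ t ∈ Ico x b, HasDerivWithinAt σ 0 (Ici t) t := fun t ht =>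
      (hσ t (hmem t (Ico_subset_Icc_self ht))).hasDerivWithinAt
    exact (constant_of_has_deriv_right_zero hcont hder b (right_mem_Icc.mpr hx.2)).symm
  have hwrep : ∀ x ∈ Ioc 0 b,
      aF x * wkbPhi h E V 1 x + bF x * wkbPhi h E V (-1) x
        = (-(2*Complex.I)/(h:ℂ)) * w x := by
    intro x hx
    simp only [haFdef, hbFdef]
    linear_combination (w x) * hW x (hsub hx)
  refine ⟨((h:ℂ)/(-(2*Complex.I))) * aF b, ((h:ℂ)/(-(2*Complex.I))) * bF b, ?_⟩
  intro x hx
  have hax : aF x = aF b := hconst aF haD x hx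
  have hbx : bF x = bF b := hconst bF hbD x hx
  have hcanc2 : (h:ℂ)/(-(2*Complex.I)) * (-(2*Complex.I)/(h:ℂ)) = 1 := by
    field_simp
  have hrep : ((h:ℂ)/(-(2*Complex.I))) * aF b * wkbPhi h E V 1 x
      + ((h:ℂ)/(-(2*Complex.I))) * bF b * wkbPhi h E V (-1) x = w x := by
    rw [← hax, ← hbx]
    calc ((h:ℂ)/(-(2*Complex.I))) * aF x * wkbPhi h E V 1 x
        + ((h:ℂ)/(-(2*Complex.I))) * bF x * wkbPhi h E V (-1) x
        = ((h:ℂ)/(-(2*Complex.I)))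
          * (aF x * wkbPhi h E V 1 x + bF x * wkbPhi h E V (-1) x) := by ring
      _ = ((h:ℂ)/(-(2*Complex.I))) * ((-(2*Complex.I)/(h:ℂ)) * w x) := by
          rw [hwrep x hx]
      _ = w x := by rw [← mul_assoc, hcanc2, one_mul]
  have hsplit : (∫ y in x..b, (wkbR E V y : ℂ) * u y *
        (wkbPhi h E V (-1) y * wkbPhi h E V 1 x - wkbPhi h E V 1 y * wkbPhi h E V (-1) x))
      = Jm x * wkbPhi h E V 1 x - Jp x * wkbPhi h E V (-1) x := by
    have e : ∀ y : ℝ, (wkbR E V y : ℂ) * u y *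
          (wkbPhi h E V (-1) y * wkbPhi h E V 1 x - wkbPhi h E V 1 y * wkbPhi h E V (-1) x)
        = fm y * wkbPhi h E V 1 x - fp y * wkbPhi h E V (-1) x := by
      intro y; simp only [hfmdef, hfpdef]; ring
    rw [intervalIntegral.integral_congr (g := fun y =>
      fm y * wkbPhi h E V 1 x - fp y * wkbPhi h E V (-1) x) (fun y _ => e y)]
    rw [intervalIntegral.integral_sub ((hintm x hx).mul_const _) ((hintp x hx).mul_const _),
      intervalIntegral.integral_mul_const, intervalIntegral.integral_mul_const]
  rw [hsplit]
  simp only [hwdef, hcpdef, hcmdef] at hrep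
  linear_combination -hrep
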